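/- An 8-dimensional 2-step nilpotent Lie algebra over K (K = ℝ or ℂ) with characteristic sequence (2,1,1,1,1,1,1) admits a symplectic form if and only if it is isomorphic to h₃ ⊕ K⁵, the direct product of the 3-dimensional Heisenberg Lie algebra with the 5-dimensional abelian Lie algebra. -/

import Mathlib

/-- A symplectic form on a Lie algebra `g` over `K`: a `K`-bilinear form which is
alternating, nondegenerate and closed, i.e.
`θ ⁅X,Y⁆ Z + θ ⁅Y,Z⁆ X + θ ⁅Z,X⁆ Y = 0` for all `X Y Z`. -/
def IsSymplecticForm (K : Type*) [RCLike K] (g : Type*) [LieRing g] [LieAlgebra K g]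
    (θ : g → g → K) : Prop :=
  (∀ (a : K) (X Y Z : g), θ (a • X + Y) Z = a * θ X Z + θ Y Z) ∧
  (∀ (a : K) (X Y Z : g), θ X (a • Y + Z) = a * θ X Y + θ X Z) ∧
  (∀ X : g, θ X X = 0) ∧
  (∀ X : g, (∀ Y : g, θ X Y = 0) → X = 0) ∧
  (∀ X Y Z : g, θ ⁅X, Y⁆ Z + θ ⁅Y, Z⁆ X + θ ⁅Z, X⁆ Y = 0)
/-- A Lie algebra is 2-step nilpotent if `[[g,g],g] = 0` and `[g,g] ≠ 0`. -/
def IsTwoStepNilpotent (g : Type*) [LieRing g] : Prop :=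
  (∀ X Y Z : g, ⁅⁅X, Y⁆, Z⁆ = 0) ∧ ∃ X Y : g, ⁅X, Y⁆ ≠ 0
/-- A 2-step nilpotent Lie algebra has characteristic sequence `(2,…,2,1,…,1)` with exactly
`k` twos iff the maximum of `rank (ad X) = dim ⁅X, g⁆` over `X ∈ g \ [g,g]` equals `k`. -/
def HasCharSeqTwos (K : Type*) [RCLike K] (g : Type*) [LieRing g] [LieAlgebra K g]
    (k : ℕ) : Prop :=
  (∀ X : g, X ∉ LieAlgebra.derivedSeries K g 1 →
      Module.finrank K ↥(LinearMap.range (LieAlgebra.ad K g X)) ≤ k) ∧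
  ∃ X : g, X ∉ LieAlgebra.derivedSeries K g 1 ∧
      Module.finrank K ↥(LinearMap.range (LieAlgebra.ad K g X)) = k
/-- The direct product `h_{2p+1} ⊕ K^m` of the `(2p+1)`-dimensional Heisenberg Lie algebra
(with basis `X_1,…,X_{2p},Z` and nonzero brackets `⁅X_{2i-1}, X_{2i}⁆ = Z`) with the
`m`-dimensional abelian Lie algebra, realized on
`((Fin p → K) × (Fin p → K)) × (K × (Fin m → K))` with bracket
`⁅(a,b,c,d), (a',b',c',d')⁆ = (0, 0, ∑ i, (a i * b' i - a' i * b i), 0)`. -/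
abbrev HeisenbergAbelian (K : Type*) [RCLike K] (p m : ℕ) : Type _ :=
  ((Fin p → K) × (Fin p → K)) × (K × (Fin m → K))

namespace HeisenbergAbelian

variable {K : Type*} [RCLike K] {p m : ℕ}

/-- The Lie bracket of `h_{2p+1} ⊕ K^m`. -/
def brak (x y : HeisenbergAbelian K p m) : HeisenbergAbelian K p m :=
  ((0, 0), (∑ i, (x.1.1 i * y.1.2 i - y.1.1 i * x.1.2 i), 0))

instance (priority := 5000) : LieRing (HeisenbergAbelian K p m) where
  bracket := brak
  add_lie x y z := by
    show brak (x + y) z = brak x z + brak y z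
    simp only [brak, Prod.fst_add, Prod.snd_add, Pi.add_apply, Prod.mk_add_mk, add_zero,
      Prod.mk.injEq, true_and, and_true, ← Finset.sum_add_distrib]
    exact Finset.sum_congr rfl fun i _ => by ring
  lie_add x y z := by
    show brak x (y + z) = brak x y + brak x z
    simp only [brak, Prod.fst_add, Prod.snd_add, Pi.add_apply, Prod.mk_add_mk, add_zero,
      Prod.mk.injEq, true_and, and_true, ← Finset.sum_add_distrib]
    exact Finset.sum_congr rfl fun i _ => by ring
  lie_self x := by
    show brak x x = 0
    simp only [brak, sub_self, Finset.sum_const_zero]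
    rfl
  leibniz_lie x y z := by
    show brak x (brak y z) = brak (brak x y) z + brak y (brak x z)
    simp only [brak, Prod.mk_add_mk, Prod.mk.injEq, Pi.zero_apply, mul_zero, zero_mul,
      sub_self, Finset.sum_const_zero, add_zero, zero_add, and_true, true_and]

instance (priority := 5000) : LieAlgebra K (HeisenbergAbelian K p m) where
  lie_smul t x y := by
    show brak x (t • y) = t • brak x y
    simp only [brak, Prod.smul_fst, Prod.smul_snd, Pi.smul_apply, Prod.smul_mk, smul_zero,
      smul_eq_mul, Prod.mk.injEq, true_and, and_true, Finset.mul_sum]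
    exact Finset.sum_congr rfl fun i _ => by ring

end HeisenbergAbelian

section SympAux

variable {K : Type*} [RCLike K]

/-- An explicit symplectic form on `h₃ ⊕ K⁵`. -/
def sympForm (x y : HeisenbergAbelian K 1 5) : K :=
  x.1.1 0 * y.2.1 - y.1.1 0 * x.2.1 + x.1.2 0 * y.2.2 0 - y.1.2 0 * x.2.2 0
    + x.2.2 1 * y.2.2 2 - y.2.2 1 * x.2.2 2 + x.2.2 3 * y.2.2 4 - y.2.2 3 * x.2.2 4

lemma brak_eq (x y : HeisenbergAbelian K 1 5) :
    ⁅x, y⁆ = ((0, 0), (x.1.1 0 * y.1.2 0 - y.1.1 0 * x.1.2 0, 0)) := by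
  show HeisenbergAbelian.brak x y = _
  simp [HeisenbergAbelian.brak]

lemma sympForm_isSymplectic : IsSymplecticForm K (HeisenbergAbelian K 1 5) sympForm := by
  refine ⟨?_, ?_, ?_, ?_, ?_⟩
  · intro a X Y Z
    simp only [sympForm, Prod.fst_add, Prod.snd_add, Prod.smul_fst, Prod.smul_snd,
      Pi.add_apply, Pi.smul_apply, smul_eq_mul]
    ring
  · intro a X Y Z
    simp only [sympForm, Prod.fst_add, Prod.snd_add, Prod.smul_fst, Prod.smul_snd,
      Pi.add_apply, Pi.smul_apply, smul_eq_mul]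
    ring
  · intro X; simp only [sympForm]; ring
  · intro X h
    have h1 := h ((0, 0), (1, 0))
    have h2 := h ((fun _ => 1, 0), (0, 0))
    have h3 := h ((0, 0), (0, Pi.single 0 1))
    have h4 := h ((0, fun _ => 1), (0, 0))
    have h5 := h ((0, 0), (0, Pi.single 2 1))
    have h6 := h ((0, 0), (0, Pi.single 1 1))
    have h7 := h ((0, 0), (0, Pi.single 4 1))
    have h8 := h ((0, 0), (0, Pi.single 3 1))
    simp only [sympForm, Pi.zero_apply, Prod.fst_zero, Prod.snd_zero, Pi.single_apply,
      mul_zero, zero_mul, mul_one, one_mul, sub_zero, zero_sub, add_zero, zero_add,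
      Fin.isValue] at h1 h2 h3 h4 h5 h6 h7 h8
    norm_num at h1 h2 h3 h4 h5 h6 h7 h8
    refine Prod.ext (Prod.ext (funext fun i => ?_) (funext fun i => ?_))
      (Prod.ext ?_ (funext fun i => ?_))
    · rw [Subsingleton.elim i 0]; simpa using h1
    · rw [Subsingleton.elim i 0]; simpa using h3
    · simpa using h2
    · fin_cases i
      · simpa using h4
      · simpa using h5
      · simpa using h6
      · simpa using h7
      · simpa using h8
  · intro X Y Z
    simp only [brak_eq, sympForm, Pi.zero_apply, Fin.isValue, zero_mul, mul_zero,
      sub_zero, zero_sub, add_zero, zero_add, sub_self]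
    ring

lemma IsSymplecticForm.comp {g h : Type*} [LieRing g] [LieAlgebra K g]
    [LieRing h] [LieAlgebra K h] (e : g ≃ₗ⁅K⁆ h) {θ : h → h → K}
    (hθ : IsSymplecticForm K h θ) : IsSymplecticForm K g (fun X Y => θ (e X) (e Y)) := by
  obtain ⟨h1, h2, h3, h4, h5⟩ := hθ
  refine ⟨?_, ?_, fun X => h3 _, ?_, ?_⟩
  · intro a X Y Z; simp only []
    have he : e (a • X + Y) = a • e X + e Y := by
      have hadd := e.toLinearEquiv.map_add (a • X) Y
      have hsm := e.toLinearEquiv.map_smul a X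
      simp only [LieEquiv.coe_toLinearEquiv] at hadd hsm
      rw [hadd, hsm]
    rw [he]; exact h1 a _ _ _
  · intro a X Y Z; simp only []
    have he : e (a • Y + Z) = a • e Y + e Z := by
      have hadd := e.toLinearEquiv.map_add (a • Y) Z
      have hsm := e.toLinearEquiv.map_smul a Y
      simp only [LieEquiv.coe_toLinearEquiv] at hadd hsm
      rw [hadd, hsm]
    rw [he]; exact h2 a _ _ _
  · intro X hX
    have hz : ∀ Y', θ (e X) Y' = 0 := fun Y' => by
      simpa [e.apply_symm_apply] using hX (e.symm Y')
    have := h4 _ hz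
    exact e.injective (by simpa using this)
  · intro X Y Z
    simp only [LieEquiv.map_lie]
    exact h5 _ _ _

lemma derived_central {g : Type*} [LieRing g] [LieAlgebra K g]
    (h2 : ∀ X Y Z : g, ⁅⁅X, Y⁆, Z⁆ = 0)
    {X : g} (hX : X ∈ LieAlgebra.derivedSeries K g 1) (Y : g) : ⁅X, Y⁆ = 0 := by
  have hX' : X ∈ (⁅(⊤ : LieIdeal K g), (⊤ : LieIdeal K g)⁆ : LieIdeal K g) := hX
  rw [← LieSubmodule.mem_toSubmodule, LieSubmodule.lieIdeal_oper_eq_linear_span] at hX'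
  clear hX
  induction hX' using Submodule.span_induction with
  | mem x hx => obtain ⟨a, b, rfl⟩ := hx; exact h2 a b Y
  | zero => simp
  | add x y _ _ hx hy => rw [add_lie, hx, hy, add_zero]
  | smul t x _ hx => rw [smul_lie, hx, smul_zero]

lemma two_le_finrank_of_indep {V : Type*} [AddCommGroup V] [Module K V] [FiniteDimensional K V]
    {p : Submodule K V} {z w : V} (hz : z ∈ p) (hw : w ∈ p)
    (h : LinearIndependent K ![z, w]) : 2 ≤ Module.finrank K ↥p := by
  have h2 : LinearIndependent K (fun i => (![⟨z, hz⟩, ⟨w, hw⟩] : Fin 2 → p) i) := by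
    apply LinearIndependent.of_comp p.subtype
    convert h using 1
    funext i
    fin_cases i <;> rfl
  simpa using h2.fintype_card_le_finrank

lemma dep_of_finrank_le_one {V : Type*} [AddCommGroup V] [Module K V] [FiniteDimensional K V]
    {p : Submodule K V} (hp : Module.finrank K ↥p ≤ 1) {z w : V}
    (hz : z ∈ p) (hw : w ∈ p) (hz0 : z ≠ 0) : ∃ c : K, w = c • z := by
  by_contra hcon
  push_neg at hcon
  have hind : LinearIndependent K ![z, w] :=
    (LinearIndependent.pair_iff' hz0).2 fun a ha => hcon a ha.symm
  exact absurd (two_le_finrank_of_indep hz hw hind) (by omega)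

end SympAux

/-- An 8-dimensional 2-step nilpotent Lie algebra over `K` with characteristic sequence
`(2,1,1,1,1,1,1)` admits a symplectic form if and only if it is isomorphic to `h₃ ⊕ K⁵`,
the direct product of the 3-dimensional Heisenberg Lie algebra with the 5-dimensional
abelian Lie algebra. -/
theorem eightDim_charSeq16_symplectic_iff
    (K : Type*) [RCLike K] (g : Type*) [LieRing g] [LieAlgebra K g] [FiniteDimensional K g]
    (h2 : IsTwoStepNilpotent g) (h8 : Module.finrank K g = 8)
    (hc : HasCharSeqTwos K g 1) :
    (∃ θ : g → g → K, IsSymplecticForm K g θ) ↔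
      Nonempty (g ≃ₗ⁅K⁆ HeisenbergAbelian K 1 5) := by
  obtain ⟨hnil, X₀, Y₀, hXY₀⟩ := h2
  constructor
  · rintro ⟨θ, hθ1, hθ2, hθ3, hθ4, hθ5⟩
    -- basic consequences of the charseq hypothesis
    obtain ⟨hrank, -⟩ := hc
    have hD : ∀ X ∈ LieAlgebra.derivedSeries K g 1, ∀ Y : g, ⁅X, Y⁆ = 0 :=
      fun X hX Y => derived_central hnil hX Y
    have hnotD : ∀ {A B : g}, ⁅A, B⁆ ≠ 0 → A ∉ LieAlgebra.derivedSeries K g 1 :=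
      fun {A B} h hA => h (hD A hA B)
    have hmul : ∀ {A B : g}, ⁅A, B⁆ ≠ 0 → ∀ W : g, ∃ c : K, ⁅A, W⁆ = c • ⁅A, B⁆ := by
      intro A B hAB W
      have hA : A ∉ LieAlgebra.derivedSeries K g 1 := hnotD hAB
      have hB : ⁅A, B⁆ ∈ LinearMap.range (LieAlgebra.ad K g A) :=
        ⟨B, by simp [LieAlgebra.ad_apply]⟩
      have hW : ⁅A, W⁆ ∈ LinearMap.range (LieAlgebra.ad K g A) :=
        ⟨W, by simp [LieAlgebra.ad_apply]⟩
      exact dep_of_finrank_le_one (hrank A hA) hB hW hAB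
    have hsk : ∀ X Y : g, ⁅Y, X⁆ = -⁅X, Y⁆ := fun X Y => (lie_skew Y X).symm
    -- all brackets are multiples of Z₀ := ⁅X₀, Y₀⁆
    have key : ∀ A B : g, ∃ c : K, ⁅A, B⁆ = c • ⁅X₀, Y₀⁆ := by
      intro A B
      by_cases hAB : ⁅A, B⁆ = 0
      · exact ⟨0, by rw [hAB, zero_smul]⟩
      by_contra hcon
      push_neg at hcon
      have hind : LinearIndependent K ![⁅X₀, Y₀⁆, ⁅A, B⁆] :=
        (LinearIndependent.pair_iff' hXY₀).2 fun a ha => hcon a ha.symm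
      -- first: ⁅A, Y₀⁆ = 0
      obtain ⟨cc, hc1⟩ := hmul hAB Y₀
      have hYX : ⁅Y₀, X₀⁆ ≠ 0 := fun h => hXY₀ (by rwa [hsk X₀ Y₀, neg_eq_zero] at h)
      obtain ⟨cc', hc2⟩ := hmul hYX A
      have hAY : ⁅A, Y₀⁆ = 0 := by
        have h1 : ⁅A, Y₀⁆ = cc' • ⁅X₀, Y₀⁆ := by
          rw [hsk A Y₀, hsk X₀ Y₀, smul_neg, neg_inj] at hc2
          exact hc2
        have hz : cc' • ⁅X₀, Y₀⁆ + (-cc) • ⁅A, B⁆ = 0 := by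
          rw [← h1, hc1]
          simp
        obtain ⟨h3, h4⟩ := LinearIndependent.pair_iff.1 hind cc' (-cc) hz
        rw [hc1]
        have : cc = 0 := by simpa using h4
        rw [this, zero_smul]
      obtain ⟨e0, he0⟩ := hmul hXY₀ B
      have hSY : ⁅X₀ + A, Y₀⁆ = ⁅X₀, Y₀⁆ := by rw [add_lie, hAY, add_zero]
      have hSne : ⁅X₀ + A, Y₀⁆ ≠ 0 := by rw [hSY]; exact hXY₀
      obtain ⟨c1, hc3⟩ := hmul hSne B
      rw [hSY, add_lie, he0] at hc3
      exact hcon (c1 - e0) (by rw [sub_smul, ← hc3]; abel)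
    choose ω hω using key
    have huniq : ∀ {A B : g} {d : K}, ⁅A, B⁆ = d • ⁅X₀, Y₀⁆ → ω A B = d := by
      intro A B d h
      exact smul_left_injective K hXY₀ ((hω A B).symm.trans h)
    -- linearity of ω
    have hωadd : ∀ X Y Z : g, ω (X + Y) Z = ω X Z + ω Y Z := fun X Y Z =>
      huniq (by rw [add_lie, hω X Z, hω Y Z, ← add_smul])
    have hωsmul : ∀ (a : K) (X Z : g), ω (a • X) Z = a * ω X Z := fun a X Z =>
      huniq (by rw [smul_lie, hω X Z, smul_smul])
    have hωsub : ∀ X Y Z : g, ω (X - Y) Z = ω X Z - ω Y Z := fun X Y Z =>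
      huniq (by rw [sub_lie, hω X Z, hω Y Z, ← sub_smul])
    have hωskew : ∀ X Y : g, ω Y X = -ω X Y := fun X Y =>
      huniq (by rw [hsk X Y, hω X Y, neg_smul])
    have hωXY : ω X₀ Y₀ = 1 := huniq (by rw [one_smul])
    have hωYX : ω Y₀ X₀ = -1 := by rw [hωskew, hωXY]
    have hωself : ∀ X : g, ω X X = 0 := fun X => huniq (by rw [lie_self, zero_smul])
    have hω0l : ∀ Y : g, ω 0 Y = 0 := fun Y => huniq (by rw [zero_lie, zero_smul])
    -- θ basics
    have θ0l : ∀ Z : g, θ 0 Z = 0 := by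
      intro Z
      have h := hθ1 1 0 0 Z
      simp only [one_smul, add_zero, one_mul] at h
      exact (add_eq_left.mp h.symm)
    have θsmul_l : ∀ (a : K) (X Z : g), θ (a • X) Z = a * θ X Z := by
      intro a X Z
      have h := hθ1 a X 0 Z
      simpa [θ0l] using h
    -- nondegeneracy gives a vector not orthogonal to Z₀
    have hfne : ∃ W : g, θ ⁅X₀, Y₀⁆ W ≠ 0 := by
      by_contra hcon
      push_neg at hcon
      exact hXY₀ (hθ4 _ hcon)
    obtain ⟨W₀, hW₀⟩ := hfne
    -- the closedness identity in terms of ω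
    have star : ∀ X Y W : g,
        ω X Y * θ ⁅X₀, Y₀⁆ W + ω Y W * θ ⁅X₀, Y₀⁆ X + ω W X * θ ⁅X₀, Y₀⁆ Y = 0 := by
      intro X Y W
      have h := hθ5 X Y W
      rw [hω X Y, hω Y W, hω W X, θsmul_l, θsmul_l, θsmul_l] at h
      exact h
    have hrep : ∀ X Y : g, ω X Y * θ ⁅X₀, Y₀⁆ W₀ =
        θ ⁅X₀, Y₀⁆ X * ω W₀ Y - θ ⁅X₀, Y₀⁆ Y * ω W₀ X := by
      intro X Y
      have h := star X Y W₀
      have h2 := hωskew W₀ Y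
      linear_combination h - θ ⁅X₀, Y₀⁆ X * h2
    -- the rank-two property
    have hker : ∀ x : g, ω x X₀ = 0 → ω x Y₀ = 0 → ∀ y : g, ω x y = 0 := by
      intro x e1 e2 y
      have r1 := hrep x X₀; rw [e1, zero_mul] at r1
      have r2 := hrep x Y₀; rw [e2, zero_mul] at r2
      have det := hrep X₀ Y₀; rw [hωXY, one_mul] at det
      have has : θ ⁅X₀, Y₀⁆ x * θ ⁅X₀, Y₀⁆ W₀ = 0 := by
        linear_combination θ ⁅X₀, Y₀⁆ x * det - θ ⁅X₀, Y₀⁆ X₀ * r2 + θ ⁅X₀, Y₀⁆ Y₀ * r1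
      have hbs : ω W₀ x * θ ⁅X₀, Y₀⁆ W₀ = 0 := by
        linear_combination ω W₀ x * det - ω W₀ X₀ * r2 + ω W₀ Y₀ * r1
      have hy := hrep x y
      have hfin : ω x y * (θ ⁅X₀, Y₀⁆ W₀ * θ ⁅X₀, Y₀⁆ W₀) = 0 := by
        linear_combination θ ⁅X₀, Y₀⁆ W₀ * hy + ω W₀ y * has - θ ⁅X₀, Y₀⁆ y * hbs
      exact (mul_eq_zero.1 hfin).resolve_right (mul_ne_zero hW₀ hW₀)
    -- the centre (as a submodule)
    let c : Submodule K g :=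
      { carrier := {x : g | ∀ y : g, ⁅x, y⁆ = 0}
        add_mem' := fun {a b} ha hb y => by rw [add_lie, ha y, hb y, add_zero]
        zero_mem' := fun y => zero_lie y
        smul_mem' := fun t a ha y => by rw [smul_lie, ha y, smul_zero] }
    have hmemc : ∀ x : g, x ∈ c ↔ ∀ y : g, ⁅x, y⁆ = 0 := fun x => Iff.rfl
    have hωc : ∀ {u : g}, u ∈ c → ∀ y : g, ω u y = 0 := fun {u} hu y =>
      huniq (by rw [hu y, zero_smul])
    have hcω : ∀ {u : g}, (∀ y : g, ω u y = 0) → u ∈ c := fun {u} hu y => by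
      rw [hω u y, hu y, zero_smul]
    have hZc : ⁅X₀, Y₀⁆ ∈ c := fun y => hnil X₀ Y₀ y
    -- decomposition g = span{X₀, Y₀} ⊕ c
    have hproj : ∀ x : g, x - (ω x Y₀ • X₀ + (-(ω x X₀)) • Y₀) ∈ c := by
      intro x
      apply hcω
      apply hker
      · rw [hωsub, hωadd, hωsmul, hωsmul, hωself, hωYX]
        ring
      · rw [hωsub, hωadd, hωsmul, hωsmul, hωXY, hωself]
        ring
    have hindXY : LinearIndependent K ![X₀, Y₀] := by
      rw [LinearIndependent.pair_iff]
      intro s t hst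
      constructor
      · have := congrArg (fun v => ω v Y₀) hst
        simpa [hωadd, hωsmul, hωXY, hωself, hω0l] using this
      · have := congrArg (fun v => ω v X₀) hst
        simpa [hωadd, hωsmul, hωYX, hωself, hω0l] using this
    let U : Submodule K g := Submodule.span K {X₀, Y₀}
    have hUfin : Module.finrank K ↥U = 2 := by
      have hset : ({X₀, Y₀} : Set g) = Set.range ![X₀, Y₀] := by
        ext t
        simp [Fin.exists_fin_two, eq_comm, or_comm]
      show Module.finrank K ↥(Submodule.span K {X₀, Y₀}) = 2
      rw [hset, finrank_span_eq_card hindXY]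
      simp
    have hsup : U ⊔ c = ⊤ := by
      rw [eq_top_iff]
      intro x _
      have hx : x = (ω x Y₀ • X₀ + (-(ω x X₀)) • Y₀) +
          (x - (ω x Y₀ • X₀ + (-(ω x X₀)) • Y₀)) := by abel
      rw [hx]
      exact Submodule.add_mem_sup
        (Submodule.add_mem _
          (Submodule.smul_mem _ _ (Submodule.subset_span (by simp)))
          (Submodule.smul_mem _ _ (Submodule.subset_span (by simp))))
        (hproj x)
    have hinf : U ⊓ c = ⊥ := by
      rw [eq_bot_iff]
      rintro x ⟨hxU, hxc⟩
      obtain ⟨a, b, rfl⟩ := Submodule.mem_span_pair.1 hxU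
      have h1 : ω (a • X₀ + b • Y₀) Y₀ = 0 := hωc hxc Y₀
      have h2 : ω (a • X₀ + b • Y₀) X₀ = 0 := hωc hxc X₀
      rw [hωadd, hωsmul, hωsmul, hωXY, hωself, mul_one, mul_zero, add_zero] at h1
      rw [hωadd, hωsmul, hωsmul, hωself, hωYX, mul_zero, mul_neg_one, zero_add,
        neg_eq_zero] at h2
      rw [Submodule.mem_bot, h1, h2, zero_smul, zero_smul, add_zero]
    -- dimension of the centre
    have hcfin : Module.finrank K ↥c = 6 := by
      have h := Submodule.finrank_sup_add_finrank_inf_eq U c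
      rw [hsup, hinf, finrank_top, h8, finrank_bot, hUfin] at h
      omega
    -- split off the line through Z₀ inside the centre
    let z₀ : ↥c := ⟨⁅X₀, Y₀⁆, hZc⟩
    have hz₀ : z₀ ≠ 0 := fun h => hXY₀ (by simpa [z₀] using congrArg Subtype.val h)
    obtain ⟨V, hV⟩ := (Submodule.span K {z₀}).exists_isCompl
    have hVfin : Module.finrank K ↥V = 5 := by
      have h := Submodule.finrank_add_eq_of_isCompl hV
      rw [finrank_span_singleton hz₀, hcfin] at h
      omega
    let bV : Module.Basis (Fin 5) K ↥V := Module.finBasisOfFinrankEq K ↥V hVfin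
    let w : Fin 5 → g := fun i => (((bV i) : ↥c) : g)
    have hwc : ∀ i, w i ∈ c := fun i => ((bV i) : ↥c).2
    -- the bracket of adapted decompositions
    have hbr : ∀ (a b a' b' : K) (u u' : g), u ∈ c → u' ∈ c →
        ⁅a • X₀ + b • Y₀ + u, a' • X₀ + b' • Y₀ + u'⁆ = (a * b' - a' * b) • ⁅X₀, Y₀⁆ := by
      intro a b a' b' u u' hu hu'
      have hu1 : ∀ v : g, ⁅u, v⁆ = 0 := hu
      have hu2 : ∀ v : g, ⁅v, u'⁆ = 0 := fun v => by rw [hsk u' v, hu' v, neg_zero]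
      have hyx : ⁅Y₀, X₀⁆ = -⁅X₀, Y₀⁆ := hsk X₀ Y₀
      simp only [add_lie, lie_add, smul_lie, lie_smul, hu1, hu2, lie_self, smul_zero,
        zero_add, add_zero, hyx, smul_neg]
      module
    -- the Lie algebra morphism from h₃ ⊕ K⁵ to g
    let φ : HeisenbergAbelian K 1 5 →ₗ⁅K⁆ g :=
      { toFun := fun x => x.1.1 0 • X₀ + x.1.2 0 • Y₀ +
          (x.2.1 • ⁅X₀, Y₀⁆ + ∑ i, x.2.2 i • w i)
        map_add' := by
          intro x y
          simp only [Prod.fst_add, Prod.snd_add, Pi.add_apply, add_smul,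
            Finset.sum_add_distrib]
          abel
        map_smul' := by
          intro t x
          simp only [Prod.smul_fst, Prod.smul_snd, Pi.smul_apply, smul_eq_mul, mul_smul,
            RingHom.id_apply, smul_add, Finset.smul_sum]
        map_lie' := by
          intro x y
          have hu : x.2.1 • ⁅X₀, Y₀⁆ + ∑ i, x.2.2 i • w i ∈ c :=
            c.add_mem (c.smul_mem _ hZc) (Submodule.sum_mem _ fun i _ => c.smul_mem _ (hwc i))
          have hu' : y.2.1 • ⁅X₀, Y₀⁆ + ∑ i, y.2.2 i • w i ∈ c :=
            c.add_mem (c.smul_mem _ hZc) (Submodule.sum_mem _ fun i _ => c.smul_mem _ (hwc i))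
          show (⁅x, y⁆ : HeisenbergAbelian K 1 5).1.1 0 • X₀ + (⁅x, y⁆ : HeisenbergAbelian K 1 5).1.2 0 • Y₀ +
              ((⁅x, y⁆ : HeisenbergAbelian K 1 5).2.1 • ⁅X₀, Y₀⁆ +
               ∑ i, (⁅x, y⁆ : HeisenbergAbelian K 1 5).2.2 i • w i) = _
          rw [brak_eq x y, hbr _ _ _ _ _ _ hu hu']
          simp
        }
    have hcmem : ∀ x : HeisenbergAbelian K 1 5,
        x.2.1 • ⁅X₀, Y₀⁆ + ∑ i, x.2.2 i • w i ∈ c := fun x =>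
      c.add_mem (c.smul_mem _ hZc) (Submodule.sum_mem _ fun i _ => c.smul_mem _ (hwc i))
    -- injectivity
    have hker0 : ∀ x : HeisenbergAbelian K 1 5, φ x = 0 → x = 0 := by
      intro x hx
      have hxdef : x.1.1 0 • X₀ + x.1.2 0 • Y₀ +
          (x.2.1 • ⁅X₀, Y₀⁆ + ∑ i, x.2.2 i • w i) = 0 := hx
      have hu := hcmem x
      have hsummem : (∑ i, x.2.2 i • w i) ∈ c :=
        Submodule.sum_mem _ fun i _ => c.smul_mem _ (hwc i)
      have ha : x.1.1 0 = 0 := by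
        have h := congrArg (fun v => ω v Y₀) hxdef
        simpa [hωadd, hωsmul, hωXY, hωself, hω0l, hωc hZc, hωc hsummem] using h
      have hb : x.1.2 0 = 0 := by
        have h := congrArg (fun v => ω v X₀) hxdef
        simpa [hωadd, hωsmul, hωYX, hωself, hω0l, hωc hZc, hωc hsummem] using h
      have hu0 : x.2.1 • ⁅X₀, Y₀⁆ + ∑ i, x.2.2 i • w i = 0 := by
        rw [ha, hb] at hxdef
        simpa using hxdef
      have hsum0 : x.2.1 • z₀ + ∑ i, x.2.2 i • (((bV i) : ↥c)) = (0 : ↥c) := by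
        apply Subtype.ext
        have hcoe : ((x.2.1 • z₀ + ∑ i, x.2.2 i • (((bV i) : ↥c)) : ↥c) : g)
            = x.2.1 • ⁅X₀, Y₀⁆ + ∑ i, x.2.2 i • w i := by
          simp [z₀, w]
        rw [hcoe, hu0]
        rfl
      have hWmem : x.2.1 • z₀ ∈ Submodule.span K {z₀} :=
        Submodule.smul_mem _ _ (Submodule.mem_span_singleton_self z₀)
      have hVmem : (∑ i, x.2.2 i • (((bV i) : ↥c)))  ∈ V :=
        Submodule.sum_mem _ fun i _ => Submodule.smul_mem _ _ (bV i).2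
      have ht : x.2.1 • z₀ = 0 := by
        have hneg : x.2.1 • z₀ = -(∑ i, x.2.2 i • (((bV i) : ↥c))) :=
          eq_neg_of_add_eq_zero_left hsum0
        have hiv : x.2.1 • z₀ ∈ V := hneg ▸ V.neg_mem hVmem
        exact (Submodule.disjoint_def.1 hV.disjoint) _ hWmem hiv
      have ht0 : x.2.1 = 0 := by
        rcases smul_eq_zero.1 ht with h | h
        · exact h
        · exact absurd h hz₀
      have hs0 : ∑ i, x.2.2 i • (bV i) = (0 : ↥V) := by
        apply Subtype.ext
        have hcoe : ((∑ i, x.2.2 i • (bV i) : ↥V) : ↥c)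
            = ∑ i, x.2.2 i • (((bV i) : ↥c)) := by
          simp
        rw [hcoe]
        rw [ht, zero_add] at hsum0
        rw [hsum0]
        rfl
      have hd : ∀ i, x.2.2 i = 0 :=
        Fintype.linearIndependent_iff.1 bV.linearIndependent x.2.2 hs0
      refine Prod.ext (Prod.ext (funext fun i => ?_) (funext fun i => ?_))
        (Prod.ext ?_ (funext fun i => ?_))
      · rw [Subsingleton.elim i 0]; simpa using ha
      · rw [Subsingleton.elim i 0]; simpa using hb
      · simpa using ht0
      · simpa using hd i
    have hinj : Function.Injective φ := by
      intro x y hxy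
      have h0 := φ.toLinearMap.map_sub x y
      rw [LieHom.coe_toLinearMap] at h0
      have h1 := hker0 (x - y) (by rw [h0, hxy, sub_self])
      exact sub_eq_zero.1 h1
    -- surjectivity
    have hsurj : Function.Surjective φ := by
      intro xg
      have hx'c : xg - (ω xg Y₀ • X₀ + (-(ω xg X₀)) • Y₀) ∈ c := hproj xg
      have hmem : (⟨_, hx'c⟩ : ↥c) ∈ Submodule.span K {z₀} ⊔ V := by
        rw [hV.sup_eq_top]; trivial
      obtain ⟨wp, hwp, vp, hvp, hsum⟩ := Submodule.mem_sup.1 hmem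
      obtain ⟨t, ht⟩ := Submodule.mem_span_singleton.1 hwp
      refine ⟨((fun _ => ω xg Y₀, fun _ => -(ω xg X₀)), (t, fun i => bV.repr ⟨vp, hvp⟩ i)), ?_⟩
      show ω xg Y₀ • X₀ + (-(ω xg X₀)) • Y₀ +
          (t • ⁅X₀, Y₀⁆ + ∑ i, bV.repr ⟨vp, hvp⟩ i • w i) = xg
      have hv : ∑ i, bV.repr ⟨vp, hvp⟩ i • w i = (vp : g) := by
        have h0 := bV.sum_repr ⟨vp, hvp⟩
        have h1 := congrArg (fun q : ↥V => ((q : ↥c) : g)) h0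
        simp only at h1
        rw [← h1]
        simp [w, -Module.Basis.sum_repr]
      have hw : t • ⁅X₀, Y₀⁆ = (wp : g) := by
        have := congrArg (fun q : ↥c => (q : g)) ht
        simpa [z₀] using this
      have hwv : ((wp : g)) + (vp : g) = xg - (ω xg Y₀ • X₀ + (-(ω xg X₀)) • Y₀) := by
        have := congrArg (fun q : ↥c => (q : g)) hsum
        simpa using this
      rw [hv, hw, hwv]
      abel
    exact ⟨(LieEquiv.ofBijective φ ⟨hinj, hsurj⟩).symm⟩
  · rintro ⟨e⟩
    exact ⟨_, IsSymplecticForm.comp e sympForm_isSymplectic⟩
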